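/- Without loss of generality for the law of excluded middle: letting x denote the fixed variable var 0, if ∅ ⊢ α ∨ ¬α holds for every formula α such that x NotFreeIn α, then ∅ ⊢ α ∨ ¬α holds for every formula α. -/
import Mathlib


/-- Variables, indexed by natural numbers. -/
structure FOVar where
  idx : ℕ
deriving DecidableEq

/-- Function symbols: an index and an arity. -/
structure FOFunc where
  idx : ℕ
  arity : ℕ
deriving DecidableEq

/-- Relation symbols: an index and an arity. -/
structure FORel where
  idx : ℕ
  arity : ℕ
deriving DecidableEq

/-- Length-indexed vectors. -/
inductive Vec (A : Type) : ℕ → Type where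
  | nil : Vec A 0
  | cons : ∀ {n}, A → Vec A n → Vec A (n + 1)

/-- A predicate holds on every element of a vector. -/
inductive Vec.All {A : Type} (P : A → Prop) : ∀ {n}, Vec A n → Prop where
  | nil : Vec.All P Vec.nil
  | cons : ∀ {n x} {xs : Vec A n}, P x → Vec.All P xs → Vec.All P (Vec.cons x xs)

/-- First-order terms. -/
inductive Term : Type where
  | varterm : FOVar → Term
  | functerm : (f : FOFunc) → Vec Term f.arity → Term

/-- First-order formulas. -/
inductive Formula : Type where
  | atom : (r : FORel) → Vec Term r.arity → Formula
  | imp : Formula → Formula → Formula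
  | and : Formula → Formula → Formula
  | or : Formula → Formula → Formula
  | all : FOVar → Formula → Formula
  | ex : FOVar → Formula → Formula

/-- The variable x does not occur in a term. -/
inductive NotInTerm (x : FOVar) : Term → Prop where
  | varterm : ∀ {y}, x ≠ y → NotInTerm x (Term.varterm y)
  | functerm : ∀ {f} {us : Vec Term f.arity},
      Vec.All (NotInTerm x) us → NotInTerm x (Term.functerm f us)

/-- The variable x does not occur in any term of a vector. -/
def NotInTerms {n : ℕ} (x : FOVar) (ts : Vec Term n) : Prop :=
  Vec.All (NotInTerm x) ts

/-- The variable x is not free in a formula. -/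
inductive NotFreeIn : FOVar → Formula → Prop where
  | atom : ∀ {x r} {ts : Vec Term r.arity},
      NotInTerms x ts → NotFreeIn x (Formula.atom r ts)
  | imp : ∀ {x α β}, NotFreeIn x α → NotFreeIn x β → NotFreeIn x (Formula.imp α β)
  | and : ∀ {x α β}, NotFreeIn x α → NotFreeIn x β → NotFreeIn x (Formula.and α β)
  | or : ∀ {x α β}, NotFreeIn x α → NotFreeIn x β → NotFreeIn x (Formula.or α β)
  | all_self : ∀ x α, NotFreeIn x (Formula.all x α)
  | ex_self : ∀ x α, NotFreeIn x (Formula.ex x α)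
  | all : ∀ {x α} (y : FOVar), NotFreeIn x α → NotFreeIn x (Formula.all y α)
  | ex : ∀ {x α} (y : FOVar), NotFreeIn x α → NotFreeIn x (Formula.ex y α)

mutual
/-- ⟨u⟩[x/t]≡v : substituting t for x in the term u yields v. -/
inductive TermSub : Term → FOVar → Term → Term → Prop where
  | var_eq : ∀ {x t}, TermSub (Term.varterm x) x t t
  | var_ne : ∀ {x t y}, x ≠ y → TermSub (Term.varterm y) x t (Term.varterm y)
  | functerm : ∀ {x t f} {us vs : Vec Term f.arity},
      TermsSub us x t vs → TermSub (Term.functerm f us) x t (Term.functerm f vs)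

/-- [us][x/t]≡vs : componentwise substitution in vectors of terms. -/
inductive TermsSub : ∀ {n}, Vec Term n → FOVar → Term → Vec Term n → Prop where
  | nil : ∀ {x t}, TermsSub Vec.nil x t Vec.nil
  | cons : ∀ {x t u v n} {us vs : Vec Term n},
      TermSub u x t v → TermsSub us x t vs →
      TermsSub (Vec.cons u us) x t (Vec.cons v vs)
end

/-- α[x/t]≡β : substituting t for all free occurrences of x in α yields β. -/
inductive FormulaSub : Formula → FOVar → Term → Formula → Prop where
  | ident : ∀ α x, FormulaSub α x (Term.varterm x) α
  | notfree : ∀ {α x t}, NotFreeIn x α → FormulaSub α x t α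
  | atom : ∀ {x t} (r : FORel) {us vs : Vec Term r.arity},
      TermsSub us x t vs → FormulaSub (Formula.atom r us) x t (Formula.atom r vs)
  | imp : ∀ {α α' β β' x t}, FormulaSub α x t α' → FormulaSub β x t β' →
      FormulaSub (Formula.imp α β) x t (Formula.imp α' β')
  | and : ∀ {α α' β β' x t}, FormulaSub α x t α' → FormulaSub β x t β' →
      FormulaSub (Formula.and α β) x t (Formula.and α' β')
  | or : ∀ {α α' β β' x t}, FormulaSub α x t α' → FormulaSub β x t β' →
      FormulaSub (Formula.or α β) x t (Formula.or α' β')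
  | all_self : ∀ {t} x α, FormulaSub (Formula.all x α) x t (Formula.all x α)
  | ex_self : ∀ {t} x α, FormulaSub (Formula.ex x α) x t (Formula.ex x α)
  | all : ∀ {α β x y t}, x ≠ y → NotInTerm y t → FormulaSub α x t β →
      FormulaSub (Formula.all y α) x t (Formula.all y β)
  | ex : ∀ {α β x y t}, x ≠ y → NotInTerm y t → FormulaSub α x t β →
      FormulaSub (Formula.ex y α) x t (Formula.ex y β)

/-- The term t is free for the variable x in a formula. -/
inductive FreeFor (t : Term) (x : FOVar) : Formula → Prop where
  | notfree : ∀ {α}, NotFreeIn x α → FreeFor t x α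
  | atom : ∀ r us, FreeFor t x (Formula.atom r us)
  | imp : ∀ {α β}, FreeFor t x α → FreeFor t x β → FreeFor t x (Formula.imp α β)
  | and : ∀ {α β}, FreeFor t x α → FreeFor t x β → FreeFor t x (Formula.and α β)
  | or : ∀ {α β}, FreeFor t x α → FreeFor t x β → FreeFor t x (Formula.or α β)
  | all_self : ∀ α, FreeFor t x (Formula.all x α)
  | ex_self : ∀ α, FreeFor t x (Formula.ex x α)
  | all : ∀ {α y}, NotInTerm y t → FreeFor t x α → FreeFor t x (Formula.all y α)
  | ex : ∀ {α y}, NotInTerm y t → FreeFor t x α → FreeFor t x (Formula.ex y α)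

/-- The variable x appears nowhere (free or bound) in a formula. -/
inductive FreshIn (x : FOVar) : Formula → Prop where
  | atom : ∀ {r} {ts : Vec Term r.arity}, NotInTerms x ts → FreshIn x (Formula.atom r ts)
  | imp : ∀ {α β}, FreshIn x α → FreshIn x β → FreshIn x (Formula.imp α β)
  | and : ∀ {α β}, FreshIn x α → FreshIn x β → FreshIn x (Formula.and α β)
  | or : ∀ {α β}, FreshIn x α → FreshIn x β → FreshIn x (Formula.or α β)
  | all : ∀ {α y}, y ≠ x → FreshIn x α → FreshIn x (Formula.all y α)
  | ex : ∀ {α y}, y ≠ x → FreshIn x α → FreshIn x (Formula.ex y α)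

/-- Formula equivalence: equality up to renaming of bound variables. -/
inductive FormulaEquiv : Formula → Formula → Prop where
  | atom : ∀ r ts, FormulaEquiv (Formula.atom r ts) (Formula.atom r ts)
  | imp : ∀ {α β α' β'}, FormulaEquiv α α' → FormulaEquiv β β' →
      FormulaEquiv (Formula.imp α β) (Formula.imp α' β')
  | and : ∀ {α β α' β'}, FormulaEquiv α α' → FormulaEquiv β β' →
      FormulaEquiv (Formula.and α β) (Formula.and α' β')
  | or : ∀ {α β α' β'}, FormulaEquiv α α' → FormulaEquiv β β' →
      FormulaEquiv (Formula.or α β) (Formula.or α' β')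
  | all : ∀ {α α'} (x : FOVar), FormulaEquiv α α' → FormulaEquiv (Formula.all x α) (Formula.all x α')
  | ex : ∀ {α α'} (x : FOVar), FormulaEquiv α α' → FormulaEquiv (Formula.ex x α) (Formula.ex x α')
  | all_rename : ∀ {α β β' x y}, NotFreeIn y α →
      FormulaSub α x (Term.varterm y) β → FormulaEquiv β β' →
      FormulaEquiv (Formula.all x α) (Formula.all y β')
  | ex_rename : ∀ {α β β' x y}, NotFreeIn y α →
      FormulaSub α x (Term.varterm y) β → FormulaEquiv β β' →
      FormulaEquiv (Formula.ex x α) (Formula.ex y β')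
  | all_rename' : ∀ {α α' β' x y}, FormulaEquiv α α' → NotFreeIn y α' →
      FormulaSub α' x (Term.varterm y) β' →
      FormulaEquiv (Formula.all x α) (Formula.all y β')
  | ex_rename' : ∀ {α α' β' x y}, FormulaEquiv α α' → NotFreeIn y α' →
      FormulaSub α' x (Term.varterm y) β' →
      FormulaEquiv (Formula.ex x α) (Formula.ex y β')

/-- Natural deduction for minimal first-order logic. -/
inductive Deduction : Set Formula → Formula → Prop where
  | assume : ∀ (α : Formula), Deduction {α} α
  | close : ∀ {Γ Δ : Set Formula} {α}, Γ ⊆ Δ → Deduction Γ α → Deduction Δ α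
  | arrowintro : ∀ {Γ β} (α : Formula), Deduction Γ β →
      Deduction (Γ \ {α}) (Formula.imp α β)
  | arrowelim : ∀ {Γ₁ Γ₂ α β}, Deduction Γ₁ (Formula.imp α β) → Deduction Γ₂ α →
      Deduction (Γ₁ ∪ Γ₂) β
  | conjintro : ∀ {Γ₁ Γ₂ α β}, Deduction Γ₁ α → Deduction Γ₂ β →
      Deduction (Γ₁ ∪ Γ₂) (Formula.and α β)
  | conjelim : ∀ {Γ₁ Γ₂ α β γ}, Deduction Γ₁ (Formula.and α β) → Deduction Γ₂ γ →
      Deduction (Γ₁ ∪ (Γ₂ \ {α, β})) γ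
  | disjintro1 : ∀ {Γ α} (β : Formula), Deduction Γ α → Deduction Γ (Formula.or α β)
  | disjintro2 : ∀ {Γ β} (α : Formula), Deduction Γ β → Deduction Γ (Formula.or α β)
  | disjelim : ∀ {Γ₁ Γ₂ Γ₃ α β γ}, Deduction Γ₁ (Formula.or α β) →
      Deduction Γ₂ γ → Deduction Γ₃ γ →
      Deduction (Γ₁ ∪ (Γ₂ \ {α}) ∪ (Γ₃ \ {β})) γ
  | univintro : ∀ {Γ α} (x : FOVar), (∀ γ ∈ Γ, NotFreeIn x γ) →
      Deduction Γ α → Deduction Γ (Formula.all x α)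
  | univelim : ∀ {Γ α x β} (t : Term), FormulaSub α x t β →
      Deduction Γ (Formula.all x α) → Deduction Γ β
  | existintro : ∀ {Γ α β} (t : Term) (x : FOVar), FormulaSub α x t β →
      Deduction Γ β → Deduction Γ (Formula.ex x α)
  | existelim : ∀ {Γ₁ Γ₂ α β x}, NotFreeIn x β → (∀ γ ∈ Γ₂ \ {α}, NotFreeIn x γ) →
      Deduction Γ₁ (Formula.ex x α) → Deduction Γ₂ β →
      Deduction (Γ₁ ∪ (Γ₂ \ {α})) β

/-- ⊥: the atom of a fixed nullary relation symbol. -/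
def Formula.bot : Formula := Formula.atom ⟨0, 0⟩ Vec.nil

/-- ¬α is α ⇒ ⊥. -/
def Formula.neg (α : Formula) : Formula := Formula.imp α Formula.bot

lemma term_fresh : ∀ u : Term, ∃ N, ∀ n, N ≤ n → NotInTerm ⟨n⟩ u := by
  intro u
  induction u using Term.rec (motive_2 := fun k (us : Vec Term k) =>
      ∃ N, ∀ m, N ≤ m → Vec.All (NotInTerm ⟨m⟩) us) with
  | varterm y =>
      exact ⟨y.idx + 1, fun n hn => NotInTerm.varterm (by
        obtain ⟨m⟩ := y; simp only at hn; intro h; injection h with h; omega)⟩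
  | functerm f us ih =>
      obtain ⟨N, hN⟩ := ih
      exact ⟨N, fun n hn => NotInTerm.functerm (hN n hn)⟩
  | nil => exact ⟨0, fun _ _ => Vec.All.nil⟩
  | cons u us ihu ihus =>
      obtain ⟨N1, h1⟩ := ihu; obtain ⟨N2, h2⟩ := ihus
      exact ⟨max N1 N2, fun n hn => Vec.All.cons
        (h1 n (le_trans (le_max_left _ _) hn))
        (h2 n (le_trans (le_max_right _ _) hn))⟩

lemma terms_fresh : ∀ {k} (us : Vec Term k), ∃ N, ∀ n, N ≤ n → NotInTerms ⟨n⟩ us := by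
  intro k us
  induction us with
  | nil => exact ⟨0, fun _ _ => Vec.All.nil⟩
  | cons u us ih =>
      obtain ⟨N1, h1⟩ := term_fresh u; obtain ⟨N2, h2⟩ := ih
      exact ⟨max N1 N2, fun n hn => Vec.All.cons
        (h1 n (le_trans (le_max_left _ _) hn))
        (h2 n (le_trans (le_max_right _ _) hn))⟩

lemma formula_fresh : ∀ α : Formula, ∃ N, ∀ n, N ≤ n → FreshIn ⟨n⟩ α := by
  intro α
  induction α with
  | atom r ts =>
      obtain ⟨N, hN⟩ := terms_fresh ts
      exact ⟨N, fun n hn => FreshIn.atom (hN n hn)⟩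
  | imp a b iha ihb =>
      obtain ⟨N1, h1⟩ := iha; obtain ⟨N2, h2⟩ := ihb
      exact ⟨max N1 N2, fun n hn => FreshIn.imp
        (h1 n (le_trans (le_max_left _ _) hn)) (h2 n (le_trans (le_max_right _ _) hn))⟩
  | and a b iha ihb =>
      obtain ⟨N1, h1⟩ := iha; obtain ⟨N2, h2⟩ := ihb
      exact ⟨max N1 N2, fun n hn => FreshIn.and
        (h1 n (le_trans (le_max_left _ _) hn)) (h2 n (le_trans (le_max_right _ _) hn))⟩
  | or a b iha ihb =>
      obtain ⟨N1, h1⟩ := iha; obtain ⟨N2, h2⟩ := ihb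
      exact ⟨max N1 N2, fun n hn => FreshIn.or
        (h1 n (le_trans (le_max_left _ _) hn)) (h2 n (le_trans (le_max_right _ _) hn))⟩
  | all y a iha =>
      obtain ⟨N, hN⟩ := iha
      exact ⟨max N (y.idx + 1), fun n hn => FreshIn.all
        (by obtain ⟨m⟩ := y; simp only [max_le_iff] at hn; intro h; injection h with h; omega)
        (hN n (le_trans (le_max_left _ _) hn))⟩
  | ex y a iha =>
      obtain ⟨N, hN⟩ := iha
      exact ⟨max N (y.idx + 1), fun n hn => FreshIn.ex
        (by obtain ⟨m⟩ := y; simp only [max_le_iff] at hn; intro h; injection h with h; omega)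
        (hN n (le_trans (le_max_left _ _) hn))⟩

lemma fresh_notfree {x : FOVar} {α : Formula} (h : FreshIn x α) : NotFreeIn x α := by
  induction h with
  | atom h => exact NotFreeIn.atom h
  | imp _ _ iha ihb => exact NotFreeIn.imp iha ihb
  | and _ _ iha ihb => exact NotFreeIn.and iha ihb
  | or _ _ iha ihb => exact NotFreeIn.or iha ihb
  | all _ _ ih => exact NotFreeIn.all _ ih
  | ex _ _ ih => exact NotFreeIn.ex _ ih

lemma term_sub_inv (x y : FOVar) (hxy : x ≠ y) :
    ∀ u : Term, NotInTerm y u →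
      ∃ v, TermSub u x (Term.varterm y) v ∧ TermSub v y (Term.varterm x) u ∧ NotInTerm x v := by
  intro u
  induction u using Term.rec (motive_2 := fun k (us : Vec Term k) =>
      NotInTerms y us → ∃ vs, TermsSub us x (Term.varterm y) vs ∧
        TermsSub vs y (Term.varterm x) us ∧ NotInTerms x vs) with
  | varterm z =>
      intro hy
      cases hy with
      | varterm hyz =>
        by_cases hxz : x = z
        · subst hxz
          exact ⟨Term.varterm y, TermSub.var_eq, TermSub.var_eq, NotInTerm.varterm hxy⟩
        · exact ⟨Term.varterm z, TermSub.var_ne hxz, TermSub.var_ne hyz,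
            NotInTerm.varterm hxz⟩
  | functerm f us ih =>
      intro hy
      cases hy with
      | functerm h =>
        obtain ⟨vs, h1, h2, h3⟩ := ih h
        exact ⟨Term.functerm f vs, TermSub.functerm h1, TermSub.functerm h2,
          NotInTerm.functerm h3⟩
  | nil =>
      rename_i hy
      exact ⟨Vec.nil, TermsSub.nil, TermsSub.nil, Vec.All.nil⟩
  | cons u us ihu ihus =>
      rename_i hy
      cases hy with
      | cons h hs =>
        obtain ⟨v, h1, h2, h3⟩ := ihu h
        obtain ⟨vs, g1, g2, g3⟩ := ihus hs
        exact ⟨Vec.cons v vs, TermsSub.cons h1 g1, TermsSub.cons h2 g2, Vec.All.cons h3 g3⟩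

lemma fresh_sub_inv (x y : FOVar) (hxy : x ≠ y) :
    ∀ α : Formula, FreshIn y α →
      ∃ β, FormulaSub α x (Term.varterm y) β ∧ FormulaSub β y (Term.varterm x) α ∧
        NotFreeIn x β := by
  intro α
  induction α with
  | atom r ts =>
      intro hy
      cases hy with
      | atom h =>
        obtain ⟨vs, h1, h2, h3⟩ := term_sub_inv x y hxy (Term.functerm ⟨0, r.arity⟩ ts)
          (NotInTerm.functerm h)
        cases h1 with
        | functerm h1 =>
          cases h2 with
          | functerm h2 =>
            cases h3 with
            | functerm h3 =>
              exact ⟨_, FormulaSub.atom r h1, FormulaSub.atom r h2, NotFreeIn.atom h3⟩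
  | imp a b iha ihb =>
      intro hy; cases hy with
      | imp ha hb =>
        obtain ⟨a', h1, h2, h3⟩ := iha ha; obtain ⟨b', g1, g2, g3⟩ := ihb hb
        exact ⟨_, FormulaSub.imp h1 g1, FormulaSub.imp h2 g2, NotFreeIn.imp h3 g3⟩
  | and a b iha ihb =>
      intro hy; cases hy with
      | and ha hb =>
        obtain ⟨a', h1, h2, h3⟩ := iha ha; obtain ⟨b', g1, g2, g3⟩ := ihb hb
        exact ⟨_, FormulaSub.and h1 g1, FormulaSub.and h2 g2, NotFreeIn.and h3 g3⟩
  | or a b iha ihb =>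
      intro hy; cases hy with
      | or ha hb =>
        obtain ⟨a', h1, h2, h3⟩ := iha ha; obtain ⟨b', g1, g2, g3⟩ := ihb hb
        exact ⟨_, FormulaSub.or h1 g1, FormulaSub.or h2 g2, NotFreeIn.or h3 g3⟩
  | all z a iha =>
      intro hy; cases hy with
      | all hzy ha =>
        by_cases hxz : x = z
        · subst hxz
          exact ⟨Formula.all x a, FormulaSub.all_self x a,
            FormulaSub.notfree (NotFreeIn.all x (fresh_notfree ha)),
            NotFreeIn.all_self x a⟩
        · obtain ⟨b, h1, h2, h3⟩ := iha ha
          exact ⟨Formula.all z b,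
            FormulaSub.all hxz (NotInTerm.varterm hzy) h1,
            FormulaSub.all (fun h => hzy h.symm) (NotInTerm.varterm (Ne.symm hxz)) h2,
            NotFreeIn.all z h3⟩
  | ex z a iha =>
      intro hy; cases hy with
      | ex hzy ha =>
        by_cases hxz : x = z
        · subst hxz
          exact ⟨Formula.ex x a, FormulaSub.ex_self x a,
            FormulaSub.notfree (NotFreeIn.ex x (fresh_notfree ha)),
            NotFreeIn.ex_self x a⟩
        · obtain ⟨b, h1, h2, h3⟩ := iha ha
          exact ⟨Formula.ex z b,
            FormulaSub.ex hxz (NotInTerm.varterm hzy) h1,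
            FormulaSub.ex (fun h => hzy h.symm) (NotInTerm.varterm (Ne.symm hxz)) h2,
            NotFreeIn.ex z h3⟩

/-- Without loss of generality for the law of excluded middle. -/
theorem wlog_lem
    (hnf : ∀ α : Formula, NotFreeIn (FOVar.mk 0) α →
      Deduction ∅ (Formula.or α (Formula.neg α))) :
    ∀ α : Formula, Deduction ∅ (Formula.or α (Formula.neg α)) := by

  intro α
  set x : FOVar := ⟨0⟩
  obtain ⟨N, hN⟩ := formula_fresh α
  set y : FOVar := ⟨max N 1⟩ with hy
  have hfresh : FreshIn y α := hN _ (le_max_left _ _)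
  have hxy : x ≠ y := by
    intro h; rw [hy] at h; injection h with h; omega
  obtain ⟨β, hsub, hback, hnf'⟩ := fresh_sub_inv x y hxy α hfresh
  have hlem : Deduction ∅ (Formula.or β (Formula.neg β)) :=
    hnf β hnf'
  have hall : Deduction ∅ (Formula.all y (Formula.or β (Formula.neg β))) :=
    Deduction.univintro y (fun γ hγ => absurd hγ (Set.notMem_empty γ)) hlem
  exact Deduction.univelim (Term.varterm x)
    (FormulaSub.or hback (FormulaSub.imp hback
      (FormulaSub.notfree (NotFreeIn.atom (show NotInTerms _ Vec.nil from Vec.All.nil))))) hall
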